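/- Let Q be an smpc of an n-atom measure P with support on m > n points. Then Q can be written as a finite convex combination ∑_k α_k Q_k where each Q_k is an smpc of P with support on at most n points, α_k > 0, and ∑_k α_k = 1. -/

import Mathlib

open Finset

def RowStochastic {n m : ℕ} (F : Matrix (Fin n) (Fin m) ℝ) : Prop :=
  (∀ i j, 0 ≤ F i j) ∧ ∀ i, ∑ j, F i j = 1

/-- Auxiliary decomposition lemma, by induction on the size of the column support. -/
theorem smpc_decomp_aux (n m : ℕ) (p : Fin n → ℝ) (hp : ∀ i, 0 < p i)
    (a : Fin n → ℝ) (b : Fin m → ℝ) :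
    ∀ N (F : Matrix (Fin n) (Fin m) ℝ), RowStochastic F →
      (∀ j, ∑ i, p i * a i * F i j = b j * ∑ i, p i * F i j) →
      (univ.filter fun j => ∑ i, p i * F i j ≠ 0).card ≤ N →
      ∃ (K : ℕ) (α : Fin K → ℝ) (G : Fin K → Matrix (Fin n) (Fin m) ℝ),
        (∀ k, 0 < α k) ∧ (∑ k, α k = 1) ∧ (∀ k, RowStochastic (G k)) ∧
        (∀ k j, ∑ i, p i * a i * G k i j = b j * ∑ i, p i * G k i j) ∧
        (∀ k, (univ.filter fun j => ∑ i, p i * G k i j ≠ 0).card ≤ n) ∧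
        (∀ i j, F i j = ∑ k, α k * G k i j) := by
  -- the trivial (one-term) decomposition, valid whenever the support is small
  have base : ∀ (F : Matrix (Fin n) (Fin m) ℝ), RowStochastic F →
      (∀ j, ∑ i, p i * a i * F i j = b j * ∑ i, p i * F i j) →
      (univ.filter fun j => ∑ i, p i * F i j ≠ 0).card ≤ n →
      ∃ (K : ℕ) (α : Fin K → ℝ) (G : Fin K → Matrix (Fin n) (Fin m) ℝ),
        (∀ k, 0 < α k) ∧ (∑ k, α k = 1) ∧ (∀ k, RowStochastic (G k)) ∧
        (∀ k j, ∑ i, p i * a i * G k i j = b j * ∑ i, p i * G k i j) ∧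
        (∀ k, (univ.filter fun j => ∑ i, p i * G k i j ≠ 0).card ≤ n) ∧
        (∀ i j, F i j = ∑ k, α k * G k i j) := by
    intro F hF hmean hcard
    exact ⟨1, fun _ => 1, fun _ => F, fun _ => one_pos, by simp, fun _ => hF,
      fun _ => hmean, fun _ => hcard, fun i j => by simp⟩
  intro N
  induction N with
  | zero =>
    intro F hF hmean hcard
    exact base F hF hmean (le_trans hcard (Nat.zero_le n))
  | succ N ih =>
    intro F hF hmean hcard
    by_cases hsmall : (univ.filter fun j => ∑ i, p i * F i j ≠ 0).card ≤ n
    · exact base F hF hmean hsmall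
    -- the big-support case
    push_neg at hsmall
    set qF : Fin m → ℝ := fun j => ∑ i, p i * F i j with hqF_def
    set S : Finset (Fin m) := univ.filter fun j => qF j ≠ 0 with hS_def
    have hqF_nonneg : ∀ j, 0 ≤ qF j := fun j =>
      Finset.sum_nonneg fun i _ => mul_nonneg (hp i).le (hF.1 i j)
    -- linear dependence of the columns indexed by S
    have hdep : ¬ LinearIndependent ℝ (fun (j : S) (i : Fin n) => F i j) := by
      intro h
      have h2 := h.fintype_card_le_finrank
      rw [Module.finrank_fin_fun, Fintype.card_coe] at h2
      omega
    obtain ⟨g, hg0, j1, hj1⟩ := Fintype.not_linearIndependent_iff.mp hdep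
    set t : Fin m → ℝ := fun j => if h : j ∈ S then g ⟨j, h⟩ else 0 with ht_def
    have ht_supp : ∀ j, j ∉ S → t j = 0 := fun j hj => dif_neg hj
    have ht_mem : ∀ (j : S), t j = g j := fun j => dif_pos j.2
    have ht_rel : ∀ i, ∑ j, t j * F i j = 0 := by
      intro i
      have h1 : ∑ j ∈ S, t j * F i j = 0 := by
        rw [← Finset.sum_coe_sort S (fun j => t j * F i j)]
        have := congrFun hg0 i
        rw [Finset.sum_apply] at this
        calc ∑ j : S, t ↑j * F i ↑j = ∑ j : S, g j * F i ↑j := by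
              exact Finset.sum_congr rfl fun j _ => by rw [ht_mem j]
          _ = 0 := this
      rw [← h1]
      exact (Finset.sum_subset (Finset.subset_univ S) fun j _ hj => by
        rw [ht_supp j hj, zero_mul]).symm
    have ht_q : ∑ j, t j * qF j = 0 := by
      calc ∑ j, t j * qF j = ∑ j, ∑ i, t j * (p i * F i j) := by
            exact Finset.sum_congr rfl fun j _ => by rw [hqF_def]; rw [Finset.mul_sum]
        _ = ∑ i, ∑ j, t j * (p i * F i j) := Finset.sum_comm
        _ = ∑ i, p i * ∑ j, t j * F i j := by
            exact Finset.sum_congr rfl fun i _ => by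
              rw [Finset.mul_sum]; exact Finset.sum_congr rfl fun j _ => by ring
        _ = 0 := by simp [ht_rel]
    have hj1S : (j1 : Fin m) ∈ S := j1.2
    have hqj1 : 0 < qF j1 := by
      have : qF j1 ≠ 0 := (Finset.mem_filter.mp hj1S).2
      exact lt_of_le_of_ne (hqF_nonneg j1) (Ne.symm this)
    have htj1 : t ↑j1 ≠ 0 := by rw [ht_mem j1]; exact hj1
    -- there exist both a positive and a negative value of t
    have hterm_ne : t ↑j1 * qF ↑j1 ≠ 0 := mul_ne_zero htj1 (ne_of_gt hqj1)
    have hpos : ∃ j, 0 < t j := by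
      by_contra h
      push_neg at h
      have hterm : ∀ j ∈ univ, t j * qF j ≤ 0 :=
        fun j _ => mul_nonpos_of_nonpos_of_nonneg (h j) (hqF_nonneg j)
      have := (Finset.sum_eq_zero_iff_of_nonpos hterm).mp ht_q ↑j1 (mem_univ _)
      exact hterm_ne this
    have hneg : ∃ j, t j < 0 := by
      by_contra h
      push_neg at h
      have hterm : ∀ j ∈ univ, 0 ≤ t j * qF j :=
        fun j _ => mul_nonneg (h j) (hqF_nonneg j)
      have := (Finset.sum_eq_zero_iff_of_nonneg hterm).mp ht_q ↑j1 (mem_univ _)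
      exact hterm_ne this
    -- the extreme step sizes
    obtain ⟨jneg, hjneg⟩ := hneg
    obtain ⟨jpos, hjpos⟩ := hpos
    obtain ⟨jm, hjm_mem, hjm_min⟩ := Finset.exists_min_image
      (univ.filter fun j => t j < 0) t ⟨jneg, by simp [hjneg]⟩
    obtain ⟨jM, hjM_mem, hjM_max⟩ := Finset.exists_max_image
      (univ.filter fun j => 0 < t j) t ⟨jpos, by simp [hjpos]⟩
    have htjm : t jm < 0 := (Finset.mem_filter.mp hjm_mem).2
    have htjM : 0 < t jM := (Finset.mem_filter.mp hjM_mem).2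
    set εp : ℝ := -1 / t jm with hεp_def
    set εm : ℝ := -1 / t jM with hεm_def
    have hεp_pos : 0 < εp := by
      rw [hεp_def, show (-1 : ℝ) / t jm = 1 / (-t jm) by ring]
      exact div_pos one_pos (by linarith)
    have hεm_neg : εm < 0 := by
      rw [hεm_def]
      exact div_neg_of_neg_of_pos (by norm_num) htjM
    have htjm_ne : t jm ≠ 0 := ne_of_lt htjm
    have htjM_ne : t jM ≠ 0 := ne_of_gt htjM
    have hεp_jm : 1 + εp * t jm = 0 := by
      rw [hεp_def]; field_simp; norm_num
    have hεm_jM : 1 + εm * t jM = 0 := by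
      rw [hεm_def]; field_simp; norm_num
    have hεp_nonneg : ∀ j, 0 ≤ 1 + εp * t j := by
      intro j
      rcases lt_or_ge (t j) 0 with h | h
      · have h1 : t jm ≤ t j := hjm_min j (by simp [h])
        have h2 : 0 ≤ εp * (t j - t jm) := mul_nonneg hεp_pos.le (by linarith)
        nlinarith [hεp_jm]
      · nlinarith [mul_nonneg hεp_pos.le h]
    have hεm_nonneg : ∀ j, 0 ≤ 1 + εm * t j := by
      intro j
      rcases lt_or_ge 0 (t j) with h | h
      · have h1 : t j ≤ t jM := hjM_max j (by simp [h])
        have h2 : 0 ≤ (-εm) * (t jM - t j) :=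
          mul_nonneg (neg_nonneg.mpr hεm_neg.le) (by linarith)
        nlinarith [hεm_jM]
      · nlinarith [mul_nonneg (neg_nonneg.mpr hεm_neg.le) (neg_nonneg.mpr h)]
    -- the two perturbed matrices
    have key : ∀ (ε : ℝ), (∀ j, 0 ≤ 1 + ε * t j) → ∀ (j0 : Fin m), j0 ∈ S → 1 + ε * t j0 = 0 →
        (RowStochastic (fun i j => F i j * (1 + ε * t j)) ∧
         (∀ j, ∑ i, p i * a i * (F i j * (1 + ε * t j)) =
            b j * ∑ i, p i * (F i j * (1 + ε * t j))) ∧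
         (univ.filter fun j => (∑ i, p i * (F i j * (1 + ε * t j))) ≠ 0).card ≤ N) := by
      intro ε hε j0 hj0S hj0
      have hq' : ∀ j, ∑ i, p i * (F i j * (1 + ε * t j)) = qF j * (1 + ε * t j) := by
        intro j
        rw [hqF_def, Finset.sum_mul]
        exact Finset.sum_congr rfl fun i _ => by ring
      refine ⟨⟨fun i j => mul_nonneg (hF.1 i j) (hε j), ?_⟩, ?_, ?_⟩
      · intro i
        have : ∀ j, F i j * (1 + ε * t j) = F i j + ε * (t j * F i j) := fun j => by ring
        simp_rw [this]
        rw [Finset.sum_add_distrib, hF.2 i, ← Finset.mul_sum, ht_rel i, mul_zero, add_zero]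
      · intro j
        have h1 : ∑ i, p i * a i * (F i j * (1 + ε * t j)) =
            (∑ i, p i * a i * F i j) * (1 + ε * t j) := by
          rw [Finset.sum_mul]; exact Finset.sum_congr rfl fun i _ => by ring
        rw [h1, hq', hmean j]; ring
      · have hsub : (univ.filter fun j => (∑ i, p i * (F i j * (1 + ε * t j))) ≠ 0)
            ⊆ S.erase j0 := by
          intro j hj
          have hj' := (Finset.mem_filter.mp hj).2
          rw [hq' j] at hj'
          have hjS : j ∈ S := by
            rw [hS_def, Finset.mem_filter]
            refine ⟨mem_univ _, fun h0 => hj' ?_⟩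
            rw [h0, zero_mul]
          have hjne : j ≠ j0 := by
            intro h0
            exact hj' (by rw [h0, hj0, mul_zero])
          exact Finset.mem_erase.mpr ⟨hjne, hjS⟩
        have h1 : (univ.filter fun j => (∑ i, p i * (F i j * (1 + ε * t j))) ≠ 0).card
            ≤ (S.erase j0).card := Finset.card_le_card hsub
        rw [Finset.card_erase_of_mem hj0S] at h1
        omega
    have hjmS : jm ∈ S := by
      by_contra h; exact absurd (ht_supp jm h) (ne_of_lt htjm)
    have hjMS : jM ∈ S := by
      by_contra h; exact absurd (ht_supp jM h) (ne_of_gt htjM)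
    obtain ⟨hRSp, hmeanp, hcardp⟩ := key εp hεp_nonneg jm hjmS hεp_jm
    obtain ⟨hRSm, hmeanm, hcardm⟩ := key εm hεm_nonneg jM hjMS hεm_jM
    obtain ⟨K1, α1, G1, hα1pos, hα1sum, hG1RS, hG1mean, hG1card, hG1dec⟩ :=
      ih _ hRSm hmeanm hcardm
    obtain ⟨K2, α2, G2, hα2pos, hα2sum, hG2RS, hG2mean, hG2card, hG2dec⟩ :=
      ih _ hRSp hmeanp hcardp
    -- the mixing weight
    set lam : ℝ := εp / (εp - εm) with hlam_def
    have hden : 0 < εp - εm := by linarith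
    have hlam_pos : 0 < lam := div_pos hεp_pos hden
    have hlam_lt : lam < 1 := (div_lt_one hden).mpr (by linarith)
    have hmix : lam * εm + (1 - lam) * εp = 0 := by
      rw [hlam_def]; field_simp; ring
    refine ⟨K1 + K2, Fin.append (fun k => lam * α1 k) (fun k => (1 - lam) * α2 k),
      Fin.append G1 G2, ?_, ?_, ?_, ?_, ?_, ?_⟩
    · intro k
      refine Fin.addCases (fun k' => ?_) (fun k' => ?_) k
      · rw [Fin.append_left]; exact mul_pos hlam_pos (hα1pos k')
      · rw [Fin.append_right]; exact mul_pos (by linarith) (hα2pos k')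
    · rw [Fin.sum_univ_add]
      simp only [Fin.append_left, Fin.append_right]
      rw [← Finset.mul_sum, ← Finset.mul_sum, hα1sum, hα2sum]; ring
    · intro k
      refine Fin.addCases (fun k' => ?_) (fun k' => ?_) k
      · rw [Fin.append_left]; exact hG1RS k'
      · rw [Fin.append_right]; exact hG2RS k'
    · intro k
      refine Fin.addCases (fun k' => ?_) (fun k' => ?_) k
      · rw [Fin.append_left]; exact hG1mean k'
      · rw [Fin.append_right]; exact hG2mean k'
    · intro k
      refine Fin.addCases (fun k' => ?_) (fun k' => ?_) k
      · rw [Fin.append_left]; exact hG1card k'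
      · rw [Fin.append_right]; exact hG2card k'
    · intro i j
      rw [Fin.sum_univ_add]
      simp only [Fin.append_left, Fin.append_right]
      have e1 : ∑ k, lam * α1 k * G1 k i j = lam * (F i j * (1 + εm * t j)) := by
        rw [hG1dec i j, Finset.mul_sum]
        exact Finset.sum_congr rfl fun k _ => by ring
      have e2 : ∑ k, (1 - lam) * α2 k * G2 k i j = (1 - lam) * (F i j * (1 + εp * t j)) := by
        rw [hG2dec i j, Finset.mul_sum]
        exact Finset.sum_congr rfl fun k _ => by ring
      rw [e1, e2]
      linear_combination (-(F i j * t j)) * hmix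

theorem smpc_is_mixture_of_small_smpcs (n m : ℕ) (hm : n < m)
    (p : Fin n → ℝ) (hp : ∀ i, 0 < p i) (hp_sum : ∑ i, p i = 1)
    (a : Fin n → ℝ) (ha : StrictMono a)
    (q : Fin m → ℝ) (hq : ∀ j, 0 < q j) (hq_sum : ∑ j, q j = 1)
    (b : Fin m → ℝ) (hb : StrictMono b)
    (F : Matrix (Fin n) (Fin m) ℝ) (hF : RowStochastic F)
    (hFq : ∀ j, ∑ i, p i * F i j = q j)
    (hFmean : ∀ j, ∑ i, p i * a i * F i j = q j * b j) :
    ∃ (K : ℕ) (α : Fin K → ℝ) (G : Fin K → Matrix (Fin n) (Fin m) ℝ),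
      (∀ k, 0 < α k) ∧ (∑ k, α k = 1) ∧
      (∀ k, RowStochastic (G k)) ∧
      (∀ k j, ∑ i, p i * a i * G k i j = b j * ∑ i, p i * G k i j) ∧
      (∀ k, (univ.filter fun j => ∑ i, p i * G k i j ≠ 0).card ≤ n) ∧
      (∀ i j, F i j = ∑ k, α k * G k i j) ∧
      (∀ j, q j = ∑ k, α k * ∑ i, p i * G k i j) := by
  have hmean : ∀ j, ∑ i, p i * a i * F i j = b j * ∑ i, p i * F i j := by
    intro j; rw [hFq j, hFmean j]; ring
  have hcard : (univ.filter fun j => ∑ i, p i * F i j ≠ 0).card ≤ m := by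
    calc (univ.filter fun j => ∑ i, p i * F i j ≠ 0).card ≤ (univ : Finset (Fin m)).card :=
          Finset.card_le_card (Finset.filter_subset _ _)
      _ = m := by simp
  obtain ⟨K, α, G, hαpos, hαsum, hGRS, hGmean, hGcard, hGdec⟩ :=
    smpc_decomp_aux n m p hp a b m F hF hmean hcard
  refine ⟨K, α, G, hαpos, hαsum, hGRS, hGmean, hGcard, hGdec, ?_⟩
  intro j
  rw [← hFq j]
  calc ∑ i, p i * F i j = ∑ i, ∑ k, α k * (p i * G k i j) := by
        refine Finset.sum_congr rfl fun i _ => ?_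
        rw [hGdec i j, Finset.mul_sum]
        exact Finset.sum_congr rfl fun k _ => by ring
    _ = ∑ k, ∑ i, α k * (p i * G k i j) := Finset.sum_comm
    _ = ∑ k, α k * ∑ i, p i * G k i j := by
        exact Finset.sum_congr rfl fun k _ => by rw [Finset.mul_sum]
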